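/- For fixed g > 0 and h₀ > 0, the shock branch f_S(h;h₀) = (h - h₀)*sqrt((g/2)*(h + h₀)/(h*h₀)) satisfies f_S''(h) < 0 for all h > h₀, i.e., f_S is strictly concave on (h₀, ∞). -/

import Mathlib

noncomputable def swShock (g h₀ : ℝ) : ℝ → ℝ := fun h =>
  (h - h₀) * Real.sqrt ((g / 2) * (h + h₀) / (h * h₀))

noncomputable def swD1 (g h₀ : ℝ) : ℝ → ℝ := fun x =>
  Real.sqrt (g/2/h₀ + g/2 * x⁻¹) +
    (x - h₀) * (g/2 * (-(x^2)⁻¹) / (2 * Real.sqrt (g/2/h₀ + g/2 * x⁻¹)))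

lemma sw_hasDeriv1 (g h₀ : ℝ) (hg : 0 < g) (hh₀ : 0 < h₀) {x : ℝ} (hx : 0 < x) :
    HasDerivAt (swShock g h₀) (swD1 g h₀ x) x := by
  have hupos : 0 < g/2/h₀ + g/2 * x⁻¹ := by positivity
  have hu : HasDerivAt (fun y : ℝ => g/2/h₀ + g/2 * y⁻¹) (g/2 * -(x^2)⁻¹) x :=
    ((hasDerivAt_inv hx.ne').const_mul (g/2)).const_add (g/2/h₀)
  have hs : HasDerivAt (fun y : ℝ => Real.sqrt (g/2/h₀ + g/2 * y⁻¹))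
      (1 / (2 * Real.sqrt (g/2/h₀ + g/2 * x⁻¹)) * (g/2 * -(x^2)⁻¹)) x :=
    (Real.hasDerivAt_sqrt hupos.ne').comp x hu
  have hF : HasDerivAt (fun y : ℝ => (y - h₀) * Real.sqrt (g/2/h₀ + g/2 * y⁻¹))
      (1 * Real.sqrt (g/2/h₀ + g/2 * x⁻¹) +
        (x - h₀) * (1 / (2 * Real.sqrt (g/2/h₀ + g/2 * x⁻¹)) * (g/2 * -(x^2)⁻¹))) x :=
    ((hasDerivAt_id x).sub_const h₀).mul hs
  have heq : swShock g h₀ =ᶠ[nhds x]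
      (fun y : ℝ => (y - h₀) * Real.sqrt (g/2/h₀ + g/2 * y⁻¹)) := by
    filter_upwards [isOpen_Ioi.mem_nhds (show x ∈ Set.Ioi (0:ℝ) from hx)] with y hy
    simp only [swShock]
    congr 1
    congr 1
    have hy0 : (y:ℝ) ≠ 0 := (Set.mem_Ioi.mp hy).ne'
    field_simp
  have := hF.congr_of_eventuallyEq heq
  refine this.congr_deriv ?_
  simp only [swD1]
  ring

lemma sw_hasDeriv2 (g h₀ : ℝ) (hg : 0 < g) (hh₀ : 0 < h₀) {x : ℝ} (hx : 0 < x) :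
    HasDerivAt (swD1 g h₀)
      (1 / (2 * Real.sqrt (g/2/h₀ + g/2 * x⁻¹)) * (g/2 * -(x^2)⁻¹) +
        (1 * ((g/2 * -(x^2)⁻¹) / (2 * Real.sqrt (g/2/h₀ + g/2 * x⁻¹))) +
          (x - h₀) * (((g/2 * -(-(↑(2:ℕ) * x^1) / (x^2)^2)) *
              (2 * Real.sqrt (g/2/h₀ + g/2 * x⁻¹)) -
            (g/2 * -(x^2)⁻¹) * (2 * (1 / (2 * Real.sqrt (g/2/h₀ + g/2 * x⁻¹)) *
              (g/2 * -(x^2)⁻¹)))) / (2 * Real.sqrt (g/2/h₀ + g/2 * x⁻¹))^2))) x := by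
  have hupos : 0 < g/2/h₀ + g/2 * x⁻¹ := by positivity
  have hu : HasDerivAt (fun y : ℝ => g/2/h₀ + g/2 * y⁻¹) (g/2 * -(x^2)⁻¹) x :=
    ((hasDerivAt_inv hx.ne').const_mul (g/2)).const_add (g/2/h₀)
  have hs : HasDerivAt (fun y : ℝ => Real.sqrt (g/2/h₀ + g/2 * y⁻¹))
      (1 / (2 * Real.sqrt (g/2/h₀ + g/2 * x⁻¹)) * (g/2 * -(x^2)⁻¹)) x :=
    (Real.hasDerivAt_sqrt hupos.ne').comp x hu
  have hN : HasDerivAt (fun y : ℝ => g/2 * -(y^2)⁻¹)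
      (g/2 * -(-(↑(2:ℕ) * x^1) / (x^2)^2)) x :=
    (((hasDerivAt_pow 2 x).inv (pow_ne_zero 2 hx.ne')).neg).const_mul (g/2)
  have hD : HasDerivAt (fun y : ℝ => 2 * Real.sqrt (g/2/h₀ + g/2 * y⁻¹))
      (2 * (1 / (2 * Real.sqrt (g/2/h₀ + g/2 * x⁻¹)) * (g/2 * -(x^2)⁻¹))) x :=
    hs.const_mul 2
  have hane : 2 * Real.sqrt (g/2/h₀ + g/2 * x⁻¹) ≠ 0 := by positivity
  have hC := hN.div hD hane
  exact hs.add (((hasDerivAt_id x).sub_const h₀).mul hC)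

lemma sw_deriv2_neg (g h₀ : ℝ) (hg : 0 < g) (hh₀ : 0 < h₀) {x : ℝ} (hx : h₀ < x) :
    deriv (deriv (swShock g h₀)) x < 0 := by
  have hx0 : 0 < x := hh₀.trans hx
  have hd1 : deriv (swShock g h₀) =ᶠ[nhds x] swD1 g h₀ := by
    filter_upwards [isOpen_Ioi.mem_nhds (show x ∈ Set.Ioi (0:ℝ) from hx0)] with y hy
    exact (sw_hasDeriv1 g h₀ hg hh₀ (Set.mem_Ioi.mp hy)).deriv
  rw [hd1.deriv_eq, (sw_hasDeriv2 g h₀ hg hh₀ hx0).deriv]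
  have hupos : 0 < g/2/h₀ + g/2 * x⁻¹ := by positivity
  set a := Real.sqrt (g/2/h₀ + g/2 * x⁻¹) with ha_def
  have ha : 0 < a := Real.sqrt_pos.2 hupos
  have ha2 : a^2 = g/2/h₀ + g/2 * x⁻¹ := Real.sq_sqrt hupos.le
  have h1 : a^2 * (x * h₀) = g/2 * (x + h₀) := by
    rw [ha2]; field_simp
  have key : (1 / (2 * a) * (g/2 * -(x^2)⁻¹) + (1 * ((g/2 * -(x^2)⁻¹) / (2*a)) +
      (x - h₀) * (((g/2 * -(-(↑(2:ℕ) * x^1) / (x^2)^2)) * (2*a) -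
        (g/2 * -(x^2)⁻¹) * (2 * (1 / (2 * a) * (g/2 * -(x^2)⁻¹)))) / (2*a)^2)))
      = -(g^2 * (5*x + 3*h₀)) / (16 * x^4 * a^3) := by
    field_simp
    linear_combination (-128) * h1
  rw [key]
  apply div_neg_of_neg_of_pos
  · nlinarith [pow_pos hg 2]
  · positivity

theorem stmt_6 (g h₀ : ℝ) (hg : 0 < g) (hh₀ : 0 < h₀) :
    (∀ h : ℝ, h₀ < h → deriv (deriv (swShock g h₀)) h < 0) ∧
    StrictConcaveOn ℝ (Set.Ioi h₀) (swShock g h₀) := by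
  refine ⟨fun h hh => sw_deriv2_neg g h₀ hg hh₀ hh, ?_⟩
  apply strictConcaveOn_of_deriv2_neg (convex_Ioi h₀)
  · intro x hxm
    have hx0 : 0 < x := hh₀.trans (Set.mem_Ioi.mp hxm)
    exact (sw_hasDeriv1 g h₀ hg hh₀ hx0).differentiableAt.continuousAt.continuousWithinAt
  · intro x hxm
    rw [interior_Ioi] at hxm
    simpa [Function.iterate_succ, Function.comp] using
      sw_deriv2_neg g h₀ hg hh₀ (Set.mem_Ioi.mp hxm)
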